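/- arXiv:2310.08695 — 2 statements merged into one kernel-verified Lean document; each statement's English description precedes it below -/
import Mathlib

section
/- For every integer l ≥ 2 and every x = (x_1,…,x_l) ∈ ℝ^l, the series defining the continuous multinomial coefficient {x} converges absolutely; in particular the continuous multinomial is a finite real-valued function on ℝ^l. -/
/-- A word `w : Fin n → Fin l` is a Smirnov word if no two consecutive letters
are equal. -/
def IsSmirnov {l n : ℕ} (w : Fin n → Fin l) : Prop :=
  ∀ i : Fin n, ∀ h : (i : ℕ) + 1 < n, w i ≠ w ⟨(i : ℕ) + 1, h⟩

/-- `kcount w j` is the number of occurrences of the letter `j` in the word `w`. -/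
noncomputable def kcount {l n : ℕ} (w : Fin n → Fin l) (j : Fin l) : ℕ :=
  Nat.card {i : Fin n // w i = j}

/-- The summand of the continuous multinomial series attached to a word `w`:
`Π_{j=1}^l x_j^{k_j(w)−1}/(k_j(w)−1)!`. -/
noncomputable def contMultinomialTerm {l n : ℕ} (x : Fin l → ℝ) (w : Fin n → Fin l) : ℝ :=
  ∏ j : Fin l, x j ^ (kcount w j - 1) / (Nat.factorial (kcount w j - 1) : ℝ)


open Finset in
lemma kcount_eq {l n : ℕ} (w : Fin n → Fin l) (j : Fin l) :
    kcount w j = (Finset.univ.filter fun i => w i = j).card := by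
  rw [kcount, Nat.card_eq_fintype_card, Fintype.card_subtype]

open Finset in
lemma sum_kcount {l n : ℕ} (w : Fin n → Fin l) : ∑ j, kcount w j = n := by
  simp_rw [kcount_eq]
  rw [← Finset.card_eq_sum_card_fiberwise (fun i _ => Finset.mem_univ (w i))]
  simp

lemma one_le_kcount {l n : ℕ} {w : Fin n → Fin l} (hw : Function.Surjective w) (j : Fin l) :
    1 ≤ kcount w j := by
  obtain ⟨i, hi⟩ := hw j
  exact Nat.one_le_iff_ne_zero.mpr (Nat.card_ne_zero.mpr ⟨⟨⟨i, hi⟩⟩, inferInstance⟩)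

open Finset in
lemma term_bound {l n : ℕ} (hl : 2 ≤ l) {x : Fin l → ℝ} {C : ℝ} (hC1 : 1 ≤ C)
    (hCx : ∀ j, |x j| ≤ C) {w : Fin n → Fin l} (hw : Function.Surjective w) :
    |contMultinomialTerm x w| ≤ C ^ (n - l) / (Nat.factorial ((n - l) / l) : ℝ) := by
  have hl0 : 0 < l := by omega
  set a : Fin l → ℕ := fun j => kcount w j - 1 with ha
  have hsum : ∑ j, a j = n - l := by
    have h1 : ∑ j, kcount w j = n := sum_kcount w
    have h2 : ∑ j, kcount w j = (∑ j, a j) + (∑ _j : Fin l, 1) := by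
      rw [← Finset.sum_add_distrib]
      apply Finset.sum_congr rfl
      intro j _
      have := one_le_kcount hw j
      simp only [ha]
      omega
    simp only [Finset.sum_const, Finset.card_univ, Fintype.card_fin, smul_eq_mul, mul_one] at h2
    omega
  -- exists j0 with big count
  haveI : NeZero l := ⟨by omega⟩
  obtain ⟨j0, -, hj0⟩ : ∃ j ∈ Finset.univ, n - l ≤ l * a j := by
    apply Finset.exists_le_of_sum_le Finset.univ_nonempty
    rw [← Finset.mul_sum, hsum]
    simp [Finset.card_univ, mul_comm]
  have hm : (n - l) / l ≤ a j0 := by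
    calc (n - l) / l ≤ (l * a j0) / l := Nat.div_le_div_right hj0
    _ = a j0 := Nat.mul_div_cancel_left _ hl0
  have habs : |contMultinomialTerm x w| =
      ∏ j, |x j| ^ (a j) / (Nat.factorial (a j) : ℝ) := by
    rw [contMultinomialTerm, Finset.abs_prod]
    congr 1; ext j
    rw [abs_div, abs_pow, Nat.abs_cast]
  rw [habs, Finset.prod_div_distrib]
  have hnum : ∏ j, |x j| ^ (a j) ≤ C ^ (n - l) := by
    rw [← hsum, ← Finset.prod_pow_eq_pow_sum]
    exact Finset.prod_le_prod (fun j _ => pow_nonneg (abs_nonneg _) _)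
      (fun j _ => pow_le_pow_left₀ (abs_nonneg _) (hCx j) _)
  have hden : (Nat.factorial ((n - l) / l) : ℝ) ≤ ∏ j, (Nat.factorial (a j) : ℝ) := by
    rw [← Nat.cast_prod]
    exact_mod_cast (Nat.factorial_le hm).trans
      (Finset.single_le_prod' (fun j _ => Nat.one_le_iff_ne_zero.mpr (Nat.factorial_ne_zero _))
        (Finset.mem_univ j0))
  exact div_le_div₀ (pow_nonneg (by linarith) _) hnum
    (by exact_mod_cast Nat.factorial_pos _) hden

lemma aux_summable (l : ℕ) (hl : 2 ≤ l) (E : ℝ) (hE : 0 ≤ E) :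
    Summable (fun n : ℕ => E ^ ((n - l) / l) / (Nat.factorial ((n - l) / l) : ℝ)) := by
  haveI : NeZero l := ⟨by omega⟩
  have hg : Summable (fun m : ℕ => E ^ m / (Nat.factorial m : ℝ)) :=
    Real.summable_pow_div_factorial E
  have h1 : Summable (fun p : ℕ × Fin l => E ^ p.1 / (Nat.factorial p.1 : ℝ)) := by
    rw [summable_prod_of_nonneg (fun p => by positivity)]
    refine ⟨fun m => summable_of_finite_support (Set.toFinite _), ?_⟩
    have : ∀ m : ℕ, ∑' _ : Fin l, E ^ m / (Nat.factorial m : ℝ)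
        = l * (E ^ m / (Nat.factorial m : ℝ)) := by
      intro m
      rw [tsum_const]
      simp [Nat.card_eq_fintype_card, nsmul_eq_mul]
    simpa [this] using hg.mul_left (l : ℝ)
  have h2 : Summable (fun n : ℕ => E ^ (n / l) / (Nat.factorial (n / l) : ℝ)) := by
    have := (Equiv.summable_iff (Nat.divModEquiv l)
      (f := fun p : ℕ × Fin l => E ^ p.1 / (Nat.factorial p.1 : ℝ))).mpr h1
    simpa [Function.comp_def, Nat.divModEquiv] using this
  rw [← summable_nat_add_iff l]
  simpa using h2

/-- For every `l ≥ 2` and `x ∈ ℝ^l`, the series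
`{x} = Σ_{n≥l} Σ_w Π_j x_j^{k_j(w)−1}/(k_j(w)−1)!` defining the continuous
multinomial coefficient, with `w` ranging over Smirnov words of length `n`
over `{1,…,l}` in which every letter occurs, converges absolutely; in
particular the continuous multinomial is a finite real-valued function on `ℝ^l`. -/
theorem contMultinomial_summable (l : ℕ) (hl : 2 ≤ l) (x : Fin l → ℝ) :
    Summable (fun p : Σ n : ℕ, {w : Fin n → Fin l // IsSmirnov w ∧ Function.Surjective w} =>
      |contMultinomialTerm x p.2.1|) := by
  set C : ℝ := 1 + ∑ j, |x j| with hC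
  have hC1 : (1 : ℝ) ≤ C :=
    le_add_of_nonneg_right (Finset.sum_nonneg fun j _ => abs_nonneg _)
  have hCx : ∀ j, |x j| ≤ C := fun j => by
    have h1 : |x j| ≤ ∑ j, |x j| :=
      Finset.single_le_sum (f := fun j => |x j|) (fun j _ => abs_nonneg (x j)) (Finset.mem_univ j)
    linarith
  set D : ℝ := l * C with hD
  have hD1 : (1 : ℝ) ≤ D := by
    have : (1 : ℝ) ≤ (l : ℝ) := by exact_mod_cast Nat.one_le_of_lt hl
    calc (1 : ℝ) = 1 * 1 := by ring
    _ ≤ l * C := by apply mul_le_mul this hC1 zero_le_one (by linarith)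
  set E : ℝ := D ^ l with hE
  have hE1 : (1 : ℝ) ≤ E := one_le_pow₀ hD1
  have hb : Summable (fun n : ℕ =>
      E ^ 2 * (E ^ ((n - l) / l) / (Nat.factorial ((n - l) / l) : ℝ))) :=
    (aux_summable l hl E (by linarith)).mul_left _
  rw [summable_sigma_of_nonneg (fun p => abs_nonneg _)]
  refine ⟨fun n => summable_of_finite_support (Set.toFinite _), ?_⟩
  apply hb.of_nonneg_of_le (fun n => tsum_nonneg fun w => abs_nonneg _)
  intro n
  set m : ℕ := (n - l) / l with hm
  haveI : Fintype {w : Fin n → Fin l // IsSmirnov w ∧ Function.Surjective w} :=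
    Fintype.ofFinite _
  rw [tsum_fintype]
  have hfp : (0 : ℝ) < (Nat.factorial m : ℝ) := by exact_mod_cast Nat.factorial_pos m
  have hbound : ∀ w : {w : Fin n → Fin l // IsSmirnov w ∧ Function.Surjective w},
      |contMultinomialTerm x w.1| ≤ C ^ (n - l) / (Nat.factorial m : ℝ) :=
    fun w => term_bound hl hC1 hCx w.2.2
  calc ∑ w : {w : Fin n → Fin l // IsSmirnov w ∧ Function.Surjective w},
        |contMultinomialTerm x w.1|
      ≤ Fintype.card {w : Fin n → Fin l // IsSmirnov w ∧ Function.Surjective w} •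
        (C ^ (n - l) / (Nat.factorial m : ℝ)) :=
        Finset.sum_le_card_nsmul _ _ _ (fun w _ => hbound w)
    _ ≤ (l : ℝ) ^ n * (C ^ (n - l) / (Nat.factorial m : ℝ)) := by
        rw [nsmul_eq_mul]
        apply mul_le_mul_of_nonneg_right _ (by positivity)
        have hcard : Fintype.card {w : Fin n → Fin l // IsSmirnov w ∧ Function.Surjective w}
            ≤ l ^ n := by
          classical
          calc Fintype.card {w : Fin n → Fin l // IsSmirnov w ∧ Function.Surjective w}
              ≤ Fintype.card (Fin n → Fin l) :=
                Fintype.card_le_of_injective Subtype.val Subtype.val_injective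
            _ = l ^ n := by simp [Fintype.card_fun]
        exact_mod_cast hcard
    _ ≤ E ^ 2 * (E ^ m / (Nat.factorial m : ℝ)) := by
        rw [mul_div_assoc', mul_div_assoc']
        apply div_le_div₀ (by positivity) _ hfp le_rfl
        have key : n ≤ l * (m + 2) := by
          have h1 : l * ((n - l) / l) + (n - l) % l = n - l := Nat.div_add_mod _ _
          have h2 : (n - l) % l < l := Nat.mod_lt _ (by omega)
          calc n ≤ (n - l) + l := by omega
            _ = (l * m + (n - l) % l) + l := by rw [hm, h1]
            _ ≤ (l * m + l) + l := Nat.add_le_add_right (Nat.add_le_add_left h2.le _) _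
            _ = l * (m + 2) := by ring
        calc (l : ℝ) ^ n * C ^ (n - l) ≤ (l : ℝ) ^ n * C ^ n := by
              apply mul_le_mul_of_nonneg_left (pow_le_pow_right₀ hC1 (Nat.sub_le n l))
              positivity
          _ = D ^ n := by rw [hD, mul_pow]
          _ ≤ D ^ (l * (m + 2)) := pow_le_pow_right₀ hD1 key
          _ = E ^ (m + 2) := by rw [hE, ← pow_mul]
          _ = E ^ 2 * E ^ m := by rw [← pow_add]; ring_nf
end

section
/- Let a group G act on a set V, and let E ⊆ V × V be a G-invariant relation (E(v,w) implies E(g·v, g·w) for all g ∈ G) satisfying the local injectivity condition: for all v, w ∈ V and g ∈ G, if E(v,w) and E(v, g·w) then g·w = w. Define the induced relation Ē on the orbit space V/G by Ē(⟦v⟧,⟦w⟧) iff there exist v' ∈ G·v and w' ∈ G·w with E(v',w'). Fix x, y ∈ V and k ∈ ℕ. Then the quotient projection induces a bijection from the set of E-paths of length k in V starting at x and ending at a point of the orbit G·y (i.e. sequences x = v_0, v_1, …, v_k with E(v_i, v_{i+1}) for all i and v_k ∈ G·y) onto the set of Ē-paths of length k in V/G from ⟦x⟧ to ⟦y⟧.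 In particular, the set of Ē-paths in V/G from ⟦x⟧ to ⟦y⟧ is in bijection with the disjoint union, over y' ∈ G·y, of the sets of E-paths in V from x to y'. -/
lemma quotient_mk_eq_iff_orbit {G V : Type*} [Group G] [MulAction G V] (a b : V) :
    Quotient.mk (MulAction.orbitRel G V) a = Quotient.mk (MulAction.orbitRel G V) b ↔
      ∃ g : G, g • b = a := by
  rw [Quotient.eq]
  exact MulAction.orbitRel_apply.trans MulAction.mem_orbit_iff

/-- Unique path lifting through a quotient by a group action: if a group `G`
acts on `V`, `E` is a `G`-invariant relation on `V` satisfying the local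
injectivity condition (`E v w` and `E v (g•w)` imply `g•w = w`), and `Ē` is the
induced relation on the orbit space `V/G`, then for all `x, y ∈ V` and `k ∈ ℕ`
the quotient projection is a bijection from the set of `E`-paths of length `k`
in `V` starting at `x` and ending in the orbit `G·y` onto the set of `Ē`-paths
of length `k` in `V/G` from `⟦x⟧` to `⟦y⟧`. -/
theorem quotient_path_lifting_bijection {G V : Type*} [Group G] [MulAction G V]
    (E : V → V → Prop)
    (hinv : ∀ (g : G) (v w : V), E v w → E (g • v) (g • w))
    (hloc : ∀ (v w : V) (g : G), E v w → E v (g • w) → g • w = w)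
    (x y : V) (k : ℕ) :
    Set.BijOn
      (fun (v : Fin (k + 1) → V) (i : Fin (k + 1)) =>
        Quotient.mk (MulAction.orbitRel G V) (v i))
      {v : Fin (k + 1) → V | v 0 = x ∧
        (∀ i : Fin k, E (v i.castSucc) (v i.succ)) ∧
        v (Fin.last k) ∈ MulAction.orbit G y}
      {u : Fin (k + 1) → Quotient (MulAction.orbitRel G V) |
        u 0 = Quotient.mk (MulAction.orbitRel G V) x ∧
        (∀ i : Fin k, ∃ v' w' : V,
          u i.castSucc = Quotient.mk (MulAction.orbitRel G V) v' ∧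
          u i.succ = Quotient.mk (MulAction.orbitRel G V) w' ∧ E v' w') ∧
        u (Fin.last k) = Quotient.mk (MulAction.orbitRel G V) y} := by
  refine ⟨?_, ?_, ?_⟩
  · -- MapsTo
    rintro v ⟨h0, hE, hlast⟩
    refine ⟨by simp [h0], fun i => ⟨v i.castSucc, v i.succ, rfl, rfl, hE i⟩, ?_⟩
    rw [quotient_mk_eq_iff_orbit]
    obtain ⟨g, hg⟩ := hlast
    exact ⟨g, hg⟩
  · -- InjOn
    rintro v ⟨hv0, hvE, -⟩ w ⟨hw0, hwE, -⟩ huv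
    have key : ∀ n : ℕ, ∀ hn : n ≤ k, v ⟨n, by omega⟩ = w ⟨n, by omega⟩ := by
      intro n
      induction n with
      | zero => intro _; simpa [hw0] using hv0
      | succ n ih =>
        intro hn
        have hnk : n < k := hn
        have ihn := ih (Nat.le_of_lt hnk)
        have hq : Quotient.mk (MulAction.orbitRel G V) (v ⟨n + 1, by omega⟩) =
            Quotient.mk (MulAction.orbitRel G V) (w ⟨n + 1, by omega⟩) :=
          congrFun huv ⟨n + 1, by omega⟩
        obtain ⟨g, hg⟩ := (quotient_mk_eq_iff_orbit _ _).mp hq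
        have hc : (⟨n, hnk⟩ : Fin k).castSucc = ⟨n, by omega⟩ := rfl
        have hs : (⟨n, hnk⟩ : Fin k).succ = ⟨n + 1, by omega⟩ := rfl
        have hEv := hvE ⟨n, hnk⟩
        have hEw := hwE ⟨n, hnk⟩
        rw [hc, hs] at hEv hEw
        rw [ihn] at hEv
        rw [← hg] at hEv
        have := hloc _ _ g hEw hEv
        rw [this] at hg
        rw [← hg]
    funext i
    have := key i.val (Nat.lt_succ_iff.mp i.isLt)
    simpa using this
  · -- SurjOn
    rintro u ⟨hu0, huE, hulast⟩
    -- build the lift by extending a prefix path one step at a time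
    have claim : ∀ n, ∀ _hn : n ≤ k, ∃ f : ℕ → V, f 0 = x ∧
        (∀ m, m < n → E (f m) (f (m + 1))) ∧
        (∀ m, ∀ hm : m ≤ n, Quotient.mk (MulAction.orbitRel G V) (f m) =
          u ⟨m, by omega⟩) := by
      intro n
      induction n with
      | zero =>
        intro _
        refine ⟨fun _ => x, rfl, fun m hm => absurd hm (Nat.not_lt_zero m), ?_⟩
        intro m hm
        interval_cases m
        exact hu0.symm
      | succ n ih =>
        intro hn1
        have hnk : n < k := hn1
        obtain ⟨f, hf0, hfE, hfQ⟩ := ih (Nat.le_of_lt hnk)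
        obtain ⟨v', w', hv', hw', hE⟩ := huE ⟨n, hnk⟩
        have hc : ((⟨n, hnk⟩ : Fin k).castSucc) = (⟨n, by omega⟩ : Fin (k + 1)) := rfl
        have hs : ((⟨n, hnk⟩ : Fin k).succ) = (⟨n + 1, by omega⟩ : Fin (k + 1)) := rfl
        rw [hc] at hv'
        rw [hs] at hw'
        have hqq : Quotient.mk (MulAction.orbitRel G V) (f n) =
            Quotient.mk (MulAction.orbitRel G V) v' := by
          rw [hfQ n le_rfl, hv']
        obtain ⟨g, hg⟩ := (quotient_mk_eq_iff_orbit _ _).mp hqq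
        have hEx : E (f n) (g • w') := by rw [← hg]; exact hinv g _ _ hE
        have hQx : Quotient.mk (MulAction.orbitRel G V) (g • w') = u ⟨n + 1, by omega⟩ := by
          rw [(quotient_mk_eq_iff_orbit (g • w') w').mpr ⟨g, rfl⟩, ← hw']
        refine ⟨fun m => if m ≤ n then f m else g • w', by simp [hf0], ?_, ?_⟩
        · intro m hm
          rcases Nat.lt_or_ge m n with h | h
          · simpa [Nat.le_of_lt h, Nat.succ_le_of_lt h] using hfE m h
          · have hmn : m = n := by omega
            subst hmn
            simpa [Nat.lt_irrefl] using hEx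
        · intro m hm
          rcases Nat.lt_or_ge m (n + 1) with h | h
          · have hmn : m ≤ n := by omega
            simp only [if_pos hmn]
            exact hfQ m hmn
          · have hmn : m = n + 1 := by omega
            subst hmn
            simpa using hQx
    obtain ⟨f, hf0, hfE, hfQ⟩ := claim k le_rfl
    refine ⟨fun i => f i.val, ⟨hf0, ?_, ?_⟩, ?_⟩
    · intro i
      exact hfE i.val i.isLt
    · have hk : Quotient.mk (MulAction.orbitRel G V) (f k) =
          u ⟨k, by omega⟩ := hfQ k le_rfl
      have hky : Quotient.mk (MulAction.orbitRel G V) (f k) =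
          Quotient.mk (MulAction.orbitRel G V) y := by
        rw [hk]
        exact hulast
      obtain ⟨g, hg⟩ := (quotient_mk_eq_iff_orbit _ _).mp hky
      exact ⟨g, hg⟩
    · funext i
      have := hfQ i.val (Nat.lt_succ_iff.mp i.isLt)
      simpa using this
end
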